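/- Let υ_j = 1/(υ'_j · ∏_{l≠j}(α_j−α_l)) for j ∈ {1,…,n}. Then for every i ≥ 0, the coefficient of x^i in the formal power series R̄(x)/Ḡ(x) equals Σ_{j=1}^n υ_j · r_j · α_j^i, where R̄(x) = x^{n−1}·R(1/x) and Ḡ(x) = ∏_{j=1}^n (1−α_j x). -/

import Mathlib

open Polynomial

private lemma geom_aux {F : Type*} [Field F] (a : F) :
    ((1 - C a * X : F[X]) : PowerSeries F) * PowerSeries.mk (fun i => a ^ i) = 1 := by
  have h : ((1 - C a * X : F[X]) : PowerSeries F)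
      = 1 - PowerSeries.C a * PowerSeries.X := by
    push_cast
    ring
  rw [h, sub_mul, one_mul]
  ext k
  cases k with
  | zero => simp
  | succ k =>
      rw [map_sub, mul_assoc]
      simp [PowerSeries.coeff_succ_X_mul, pow_succ, mul_comm]

/-- Explicit formula for the syndrome power series: the `i`-th coefficient of
`R̄(x)/Ḡ(x)` equals `Σ_j υ_j·r_j·α_j^i`, where
`υ_j = 1/(υ'_j·∏_{l≠j}(α_j−α_l))`, `R̄ = x^{n−1}·R(1/x)` and
`Ḡ = ∏_j (1−α_j·x)`. -/
theorem syndrome_coefficients_explicit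
    (F : Type*) [Field F] (n : ℕ)
    (α υ' : Fin n → F) (hα : Function.Injective α) (hα0 : ∀ i, α i ≠ 0)
    (hυ' : ∀ i, υ' i ≠ 0)
    (r : Fin n → F)
    (R : F[X]) (hRdeg : R.degree < (n : ℕ))
    (hR : ∀ j, R.eval (α j) = r j / υ' j) :
    ∀ i : ℕ,
      PowerSeries.coeff i
          ((R.reflect (n - 1) : PowerSeries F) *
            ((∏ j, (1 - C (α j) * X) : F[X]) : PowerSeries F)⁻¹) =
        ∑ j, (1 / (υ' j * ∏ l ∈ Finset.univ.erase j, (α j - α l))) * r j * α j ^ i := by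
  classical
  intro i
  rcases Nat.eq_zero_or_pos n with hn | hn
  · subst hn
    have hR0 : R = 0 := by
      rw [← degree_eq_bot]
      simpa using hRdeg
    simp [hR0]
  set c : Fin n → F := fun j => 1 / (υ' j * ∏ l ∈ Finset.univ.erase j, (α j - α l)) with hc
  set P : F[X] :=
    ∑ j, C (c j * r j) * ∏ l ∈ Finset.univ.erase j, (1 - C (α l) * X) with hP
  set G : F[X] := ∏ j, (1 - C (α j) * X) with hG
  have hprod_ne : ∀ j, (∏ l ∈ Finset.univ.erase j, (α j - α l)) ≠ 0 := by
    intro j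
    refine Finset.prod_ne_zero_iff.2 fun l hl => ?_
    have hlj : l ≠ j := (Finset.mem_erase.1 hl).1
    exact sub_ne_zero_of_ne fun h => hlj (hα h.symm)
  have hRnat : R.natDegree ≤ n - 1 := by
    rcases eq_or_ne R 0 with rfl | hR0
    · simp
    · have := (degree_eq_natDegree hR0) ▸ hRdeg
      exact Nat.le_sub_one_of_lt (by exact_mod_cast this)
  -- evaluation points
  have hinj : Set.InjOn (fun j : Fin n => (α j)⁻¹) (Finset.univ : Finset (Fin n)) := by
    intro a _ b _ h
    exact hα (inv_injective h)
  -- degree bounds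
  have hcard : ((Finset.univ : Finset (Fin n)).card : WithBot ℕ) = (n : ℕ) := by simp
  have hlt : ((n - 1 : ℕ) : WithBot ℕ) < ((n : ℕ) : WithBot ℕ) := by
    exact_mod_cast Nat.sub_lt hn Nat.one_pos
  have hdR : (R.reflect (n - 1)).degree < ((Finset.univ : Finset (Fin n)).card : WithBot ℕ) := by
    rw [hcard]
    refine lt_of_le_of_lt ?_ hlt
    refine le_trans (degree_le_natDegree) ?_
    have : (R.reflect (n - 1)).natDegree ≤ n - 1 := by
      refine natDegree_le_iff_coeff_eq_zero.2 fun N hN => ?_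
      rw [coeff_reflect]
      have hrev : revAt (n - 1) N = N := by
        have : ¬ N ≤ n - 1 := by omega
        exact revAt_eq_self_of_lt hN
      rw [hrev]
      exact coeff_eq_zero_of_natDegree_lt (lt_of_le_of_lt hRnat hN)
    exact_mod_cast this
  have hfac_nat : ∀ a : F, (1 - C a * X : F[X]).natDegree ≤ 1 := by
    intro a
    refine le_trans (natDegree_sub_le _ _) ?_
    simp [natDegree_C_mul_le]
    exact natDegree_C_mul_le a X |>.trans (by simp)
  have hdP : P.degree < ((Finset.univ : Finset (Fin n)).card : WithBot ℕ) := by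
    rw [hcard]
    refine lt_of_le_of_lt ?_ hlt
    refine le_trans (degree_le_natDegree) ?_
    have : P.natDegree ≤ n - 1 := by
      refine natDegree_sum_le_of_forall_le _ _ fun j _ => ?_
      refine le_trans (natDegree_mul_le) ?_
      have h1 : (∏ l ∈ Finset.univ.erase j, (1 - C (α l) * X)).natDegree ≤ n - 1 := by
        refine le_trans (natDegree_prod_le _ _) ?_
        refine le_trans (Finset.sum_le_card_nsmul _ _ 1 fun l _ => hfac_nat (α l)) ?_
        simp [Finset.card_erase_of_mem]
      rw [natDegree_C, zero_add]
      exact h1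
    exact_mod_cast this
  -- the key polynomial identity
  have hkey : R.reflect (n - 1) = P := by
    refine Polynomial.eq_of_degrees_lt_of_eval_index_eq
      (v := fun j : Fin n => (α j)⁻¹) Finset.univ hinj hdR hdP ?_
    intro j _
    have hpow_ne : (α j) ^ (n - 1) ≠ 0 := pow_ne_zero _ (hα0 j)
    refine mul_right_cancel₀ hpow_ne ?_
    -- LHS
    haveI : Invertible (α j) := invertibleOfNonzero (hα0 j)
    have hL : (R.reflect (n - 1)).eval ((α j)⁻¹) * (α j) ^ (n - 1) = r j / υ' j := by
      have h := eval₂_reflect_mul_pow (RingHom.id F) (α j) (n - 1) R hRnat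
      rw [invOf_eq_inv] at h
      have h2 : eval₂ (RingHom.id F) ((α j)⁻¹) (reflect (n - 1) R)
          = eval ((α j)⁻¹) (reflect (n - 1) R) := rfl
      have h3 : eval₂ (RingHom.id F) (α j) R = eval (α j) R := rfl
      rw [h2, h3, hR j] at h
      exact h
    rw [hL]
    -- RHS
    have hprodmul :
        (∏ l ∈ Finset.univ.erase j, (1 - α l * (α j)⁻¹)) * (α j) ^ (n - 1)
          = ∏ l ∈ Finset.univ.erase j, (α j - α l) := by
      have hcarde : (Finset.univ.erase j).card = n - 1 := by
        simp [Finset.card_erase_of_mem]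
      rw [← hcarde, ← Finset.prod_const, ← Finset.prod_mul_distrib]
      refine Finset.prod_congr rfl fun l _ => ?_
      rw [sub_mul, one_mul, mul_assoc, inv_mul_cancel₀ (hα0 j), mul_one]
    have hevP : P.eval ((α j)⁻¹)
        = c j * r j * ∏ l ∈ Finset.univ.erase j, (1 - α l * (α j)⁻¹) := by
      rw [hP]
      rw [eval_finset_sum]
      rw [Finset.sum_eq_single j]
      · simp [eval_prod]
      · intro k _ hkj
        have hjk : j ∈ Finset.univ.erase k := Finset.mem_erase.2 ⟨Ne.symm hkj, Finset.mem_univ j⟩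
        rw [eval_mul, eval_prod]
        rw [Finset.prod_eq_zero hjk]
        · ring
        · simp [inv_mul_cancel₀ (hα0 j), mul_inv_cancel₀ (hα0 j)]
      · simp
    rw [hevP, mul_assoc, hprodmul]
    rw [hc]
    field_simp
    rw [mul_div_mul_right _ _ (hprod_ne j)]
  -- power series part
  have hG1 : PowerSeries.constantCoeff (G : PowerSeries F) ≠ 0 := by
    have h0 : PowerSeries.constantCoeff (G : PowerSeries F) = G.coeff 0 := by
      rw [← Polynomial.coeff_coe, PowerSeries.coeff_zero_eq_constantCoeff_apply]
    rw [h0, Polynomial.coeff_zero_eq_eval_zero, hG, eval_prod]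
    simp
  set S : PowerSeries F := PowerSeries.mk fun i => ∑ j, c j * r j * α j ^ i with hS
  have hSsum : S = ∑ j, PowerSeries.C (c j * r j) * PowerSeries.mk (fun i => α j ^ i) := by
    ext k
    simp [hS, PowerSeries.coeff_mk, PowerSeries.coeff_C_mul, mul_assoc]
  have hPcast : (P : PowerSeries F)
      = ∑ j, PowerSeries.C (c j * r j) *
          ((∏ l ∈ Finset.univ.erase j, (1 - C (α l) * X) : F[X]) : PowerSeries F) := by
    rw [hP, ← coeToPowerSeries.ringHom_apply, map_sum]
    refine Finset.sum_congr rfl fun j _ => ?_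
    rw [map_mul, coeToPowerSeries.ringHom_apply, coeToPowerSeries.ringHom_apply,
      Polynomial.coe_C]
  have hGsplit : ∀ j, (G : PowerSeries F)
      = ((1 - C (α j) * X : F[X]) : PowerSeries F) *
        ((∏ l ∈ Finset.univ.erase j, (1 - C (α l) * X) : F[X]) : PowerSeries F) := by
    intro j
    rw [hG, ← Polynomial.coe_mul]
    exact congrArg (fun p : F[X] => (p : PowerSeries F))
      (Finset.mul_prod_erase _ _ (Finset.mem_univ j)).symm
  have hSG : S * (G : PowerSeries F) = (P : PowerSeries F) := by
    rw [hSsum, Finset.sum_mul, hPcast]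
    refine Finset.sum_congr rfl fun j _ => ?_
    rw [mul_assoc]
    congr 1
    rw [hGsplit j, ← mul_assoc,
      mul_comm (PowerSeries.mk fun i => α j ^ i) ((1 - C (α j) * X : F[X]) : PowerSeries F),
      geom_aux, one_mul]
  have hfinal : (R.reflect (n - 1) : PowerSeries F) * ((G : PowerSeries F))⁻¹ = S := by
    rw [hkey, ← hSG, mul_assoc, PowerSeries.mul_inv_cancel _ hG1, mul_one]
  rw [hfinal, hS, PowerSeries.coeff_mk]
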